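/- In a quasi-median graph, for every hyperplane J, the graph obtained from X by removing the interiors of the edges of J is disconnected. -/

import Mathlib

/-- Triangle condition. -/
def TriangleCondition {V : Type*} (X : SimpleGraph V) : Prop :=
  ∀ u v w : V, X.Adj v w → X.dist u v = X.dist u w →
    ∃ x : V, X.Adj v x ∧ X.Adj w x ∧ X.dist u x + 1 = X.dist u v

/-- Quadrangle condition. -/
def QuadrangleCondition {V : Type*} (X : SimpleGraph V) : Prop :=
  ∀ u z v w : V, X.Adj v z → X.Adj w z → v ≠ w →
    X.dist u v = X.dist u w → X.dist u z = X.dist u v + 1 →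
    ∃ x : V, X.Adj v x ∧ X.Adj w x ∧ X.dist u x + 1 = X.dist u v

/-- A graph is weakly modular if it satisfies the triangle and quadrangle conditions. -/
def WeaklyModular {V : Type*} (X : SimpleGraph V) : Prop :=
  TriangleCondition X ∧ QuadrangleCondition X

/-- `K₄⁻`: the complete graph on four vertices minus the edge `{2,3}`. -/
def K4minus : SimpleGraph (Fin 4) :=
  SimpleGraph.fromRel (fun a b => ¬((a = 2 ∧ b = 3) ∨ (a = 3 ∧ b = 2)))

/-- A graph is quasi-median if it is connected, weakly modular, and contains no
induced `K₄⁻` and no induced `K_{3,2}`. -/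
def QuasiMedian {V : Type*} (X : SimpleGraph V) : Prop :=
  X.Connected ∧ WeaklyModular X ∧
    IsEmpty (K4minus ↪g X) ∧ IsEmpty (completeBipartiteGraph (Fin 3) (Fin 2) ↪g X)

/-- Two edges of `X` are elementarily related if they are two sides of a triangle
or opposite sides of a square. -/
def EdgeRel {V : Type*} (X : SimpleGraph V) (e e' : Sym2 V) : Prop :=
  e ∈ X.edgeSet ∧ e' ∈ X.edgeSet ∧
    ((∃ a b c : V, e = s(a, b) ∧ e' = s(a, c) ∧ X.Adj a b ∧ X.Adj a c ∧ X.Adj b c) ∨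
     (∃ a b c d : V, e = s(a, b) ∧ e' = s(c, d) ∧ X.Adj a b ∧ X.Adj c d ∧
        X.Adj a c ∧ X.Adj b d ∧ a ≠ d ∧ b ≠ c))

/-- A hyperplane of `X`: the equivalence class, under the transitive closure of the
square/triangle relation, of some edge of `X`. -/
def IsHyperplane {V : Type*} (X : SimpleGraph V) (J : Set (Sym2 V)) : Prop :=
  ∃ e ∈ X.edgeSet, J = {e' | e' ∈ X.edgeSet ∧ Relation.EqvGen (EdgeRel X) e e'}

/-- A hyperplane `J` separates `u` from `v` if every walk from `u` to `v` uses an edge of `J`. -/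
def Separates {V : Type*} (X : SimpleGraph V) (J : Set (Sym2 V)) (u v : V) : Prop :=
  ∀ p : X.Walk u v, ∃ e ∈ p.edges, e ∈ J

open Classical in
/-- The number of times the walk `p` crosses the hyperplane `J`. -/
noncomputable def crossCount {V : Type*} {X : SimpleGraph V} {u v : V}
    (p : X.Walk u v) (J : Set (Sym2 V)) : ℕ :=
  (p.edges.filter (fun e => e ∈ J)).length

section Aux

variable {V : Type*} {X : SimpleGraph V}

private lemma edgeRel_tri {a b c : V} (hab : X.Adj a b) (hac : X.Adj a c) (hbc : X.Adj b c) :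
    EdgeRel X s(a, b) s(a, c) :=
  ⟨X.mem_edgeSet.2 hab, X.mem_edgeSet.2 hac, Or.inl ⟨a, b, c, rfl, rfl, hab, hac, hbc⟩⟩

private lemma edgeRel_sq {a b c d : V} (hab : X.Adj a b) (hcd : X.Adj c d)
    (hac : X.Adj a c) (hbd : X.Adj b d) (had : a ≠ d) (hbc : b ≠ c) :
    EdgeRel X s(a, b) s(c, d) :=
  ⟨X.mem_edgeSet.2 hab, X.mem_edgeSet.2 hcd,
    Or.inr ⟨a, b, c, d, rfl, rfl, hab, hcd, hac, hbd, had, hbc⟩⟩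

private lemma hyp_mem_of_rel {J : Set (Sym2 V)} (hJ : IsHyperplane X J) {e e' : Sym2 V}
    (he : e ∈ J) (hr : EdgeRel X e e') : e' ∈ J := by
  obtain ⟨e0, he0, rfl⟩ := hJ
  exact ⟨hr.2.1, Relation.EqvGen.trans _ _ _ he.2 (Relation.EqvGen.rel _ _ hr)⟩

private lemma hyp_mem_of_rel' {J : Set (Sym2 V)} (hJ : IsHyperplane X J) {e e' : Sym2 V}
    (he' : e' ∈ J) (hr : EdgeRel X e e') : e ∈ J := by
  obtain ⟨e0, he0, rfl⟩ := hJ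
  exact ⟨hr.1, Relation.EqvGen.trans _ _ _ he'.2
    (Relation.EqvGen.symm _ _ (Relation.EqvGen.rel _ _ hr))⟩

private lemma exists_max_split (g : V → ℕ) :
    ∀ l : List V, l ≠ [] → ∃ l1 a l2, l = l1 ++ a :: l2 ∧
      (∀ b ∈ l, g b ≤ g a) ∧ (∀ b ∈ l2, g b < g a) := by
  intro l
  induction l with
  | nil => simp
  | cons c t ih =>
    intro _
    rcases eq_or_ne t [] with rfl | ht
    · exact ⟨[], c, [], rfl, by simp, by simp⟩
    · obtain ⟨l1, a, l2, hteq, hmax, hstrict⟩ := ih ht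
      by_cases hc : g c ≤ g a
      · refine ⟨c :: l1, a, l2, by rw [hteq]; rfl, ?_, hstrict⟩
        intro b hb
        rcases List.mem_cons.1 hb with rfl | hb
        · exact hc
        · exact hmax b hb
      · push_neg at hc
        refine ⟨[], c, t, rfl, ?_, ?_⟩
        · intro b hb
          rcases List.mem_cons.1 hb with rfl | hb
          · exact le_refl _
          · exact le_of_lt (lt_of_le_of_lt (hmax b (hteq ▸ hb)) hc)
        · intro b hb
          exact lt_of_le_of_lt (hmax b (hteq ▸ hb)) hc

private lemma head?_append_cons (A : List V) (c : V) (t : List V) :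
    (A ++ c :: t).head? = (A ++ [c]).head? := by
  cases A <;> simp

private lemma descent {J : Set (Sym2 V)} (hJ : IsHyperplane X J)
    (hconn : X.Connected) (htri : TriangleCondition X) (hquad : QuadrangleCondition X)
    {x y : V} (hxy : X.Adj x y) (hJxy : s(x, y) ∈ J) :
    ∀ (N : ℕ) (L : List V),
      (L.map fun v => 4 ^ X.dist x v).sum ≤ N →
      L.IsChain (fun a b => X.Adj a b ∧ s(a, b) ∉ J) →
      L.head? = some x → L.getLast? = some y → False := by
  intro N
  induction N with
  | zero =>
    intro L hμ hchain hhead hlast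
    cases L with
    | nil => simp at hhead
    | cons c t =>
      simp only [List.map_cons, List.sum_cons] at hμ
      have : 0 < 4 ^ X.dist x c := pow_pos (by norm_num) _
      omega
  | succ N ih =>
    intro L hμ hchain hhead hlast
    have hLne : L ≠ [] := by rintro rfl; simp at hhead
    obtain ⟨l1, a, l2, hLeq, hmax, hstrict⟩ :=
      exists_max_split (fun v => X.dist x v) L hLne
    have hyL : y ∈ L := by
      obtain ⟨h, h2⟩ := List.mem_getLast?_eq_getLast (x := y) (l := L) hlast
      rw [h2]; exact List.getLast_mem h
    have hdxy : X.dist x y = 1 := SimpleGraph.dist_eq_one_iff_adj.2 hxy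
    have hM1 : 1 ≤ X.dist x a := by
      have := hmax y hyL
      omega
    have hl1ne : l1 ≠ [] := by
      rintro rfl
      rw [hLeq] at hhead
      simp only [List.nil_append, List.head?_cons, Option.some.injEq] at hhead
      rw [hhead] at hM1
      simp [SimpleGraph.dist_self] at hM1
    obtain ⟨A, p, rfl⟩ := l1.eq_nil_or_concat.resolve_left hl1ne
    have hL2 : L = A ++ p :: a :: l2 := by
      rw [hLeq]; simp [List.concat_eq_append, List.append_assoc]
    subst hL2
    rw [List.isChain_append] at hchain
    obtain ⟨hcA, hcR, hglue⟩ := hchain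
    obtain ⟨hRpa, hcR2⟩ := List.isChain_cons_cons.1 hcR
    have hpa := hRpa.1
    have hpM : X.dist x p ≤ X.dist x a := hmax p (by simp)
    have hp_low : X.dist x a ≤ X.dist x p + 1 := by
      have h1 := hconn.dist_triangle (u := x) (v := p) (w := a)
      have h2 : X.dist p a = 1 := SimpleGraph.dist_eq_one_iff_adj.2 hpa
      omega
    cases l2 with
    | nil =>
      have hay : a = y := by
        rw [List.getLast?_append_cons] at hlast
        simpa using hlast
      subst hay
      have hMy : X.dist x a = 1 := hdxy
      rcases Nat.lt_or_ge (X.dist x p) 1 with h0 | h1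
      · have hpx : p = x := (hconn.dist_eq_zero_iff.1 (by omega)).symm
        rw [hpx] at hRpa
        exact hRpa.2 hJxy
      · have hxp1 : X.dist x p = 1 := le_antisymm (by omega) h1
        have hadj_xp : X.Adj x p := SimpleGraph.dist_eq_one_iff_adj.1 hxp1
        have hyx : s(a, x) ∈ J := by rwa [Sym2.eq_swap] at hJxy
        have hyp : s(a, p) ∈ J :=
          hyp_mem_of_rel hJ hyx (edgeRel_tri hxy.symm hpa.symm hadj_xp)
        exact hRpa.2 (by rwa [Sym2.eq_swap] at hyp)
    | cons b B =>
      obtain ⟨hRab, hcB⟩ := List.isChain_cons_cons.1 hcR2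
      have hab := hRab.1
      have hb_lt : X.dist x b < X.dist x a := hstrict b List.mem_cons_self
      have hb_ge : X.dist x a ≤ X.dist x b + 1 := by
        have h1 := hconn.dist_triangle (u := x) (v := b) (w := a)
        have h2 : X.dist b a = 1 := SimpleGraph.dist_eq_one_iff_adj.2 hab.symm
        omega
      by_cases hcase : X.dist x p = X.dist x a
      · -- triangle case
        obtain ⟨m, hm1, hm2, hm3⟩ := htri x p a hpa hcase
        have hpm_notJ : s(p, m) ∉ J := fun hmem =>
          hRpa.2 (hyp_mem_of_rel' hJ hmem (edgeRel_tri hpa hm1 hm2))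
        have ham_notJ : s(a, m) ∉ J := fun hmem => by
          have := hyp_mem_of_rel' hJ hmem (edgeRel_tri hpa.symm hm2 hm1)
          rw [Sym2.eq_swap] at this
          exact hRpa.2 this
        by_cases hmb : m = b
        · subst hmb
          refine ih (A ++ p :: m :: B) ?_ ?_ ?_ ?_
          · simp only [List.map_append, List.map_cons, List.sum_append, List.sum_cons] at hμ ⊢
            have : 0 < 4 ^ X.dist x a := pow_pos (by norm_num) _
            omega
          · rw [List.isChain_append]
            refine ⟨hcA, List.isChain_cons_cons.2 ⟨⟨hm1, hpm_notJ⟩, hcB⟩, ?_⟩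
            intro z hz w hw
            simp only [List.head?_cons, Option.mem_def, Option.some.injEq] at hw
            subst hw
            exact hglue z hz p rfl
          · rw [head?_append_cons]
            rw [head?_append_cons] at hhead
            exact hhead
          · rw [List.getLast?_append_cons] at hlast ⊢
            rw [List.getLast?_cons_cons, List.getLast?_cons_cons] at hlast
            rw [List.getLast?_cons_cons]
            exact hlast
        · obtain ⟨m', h1', h2', h3'⟩ := hquad x a m b hm2.symm hab.symm hmb
            (by omega) (by omega)
          have ham' : a ≠ m' := by
            intro h
            rw [← h] at h3'
            omega
          have hmm'_notJ : s(m, m') ∉ J := fun hmem =>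
            hRab.2 (hyp_mem_of_rel' hJ hmem (edgeRel_sq hab h1' hm2 h2' ham' (Ne.symm hmb)))
          have hm'b_notJ : s(m', b) ∉ J := fun hmem => by
            have := hyp_mem_of_rel' hJ hmem
              (edgeRel_sq hm2.symm h2'.symm h1' hab hmb ham')
            rw [Sym2.eq_swap] at this
            exact ham_notJ this
          refine ih (A ++ p :: m :: m' :: b :: B) ?_ ?_ ?_ ?_
          · simp only [List.map_append, List.map_cons, List.sum_append, List.sum_cons] at hμ ⊢
            have hkey : 4 ^ X.dist x m + 4 ^ X.dist x m' < 4 ^ X.dist x a := by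
              have e1 : X.dist x m + 1 = X.dist x a := by omega
              have e2 : X.dist x m' + 2 = X.dist x a := by omega
              have h4 : 0 < (4 : ℕ) ^ X.dist x m' := pow_pos (by norm_num) _
              have d1 : X.dist x m = X.dist x m' + 1 := by omega
              have d2 : X.dist x a = X.dist x m' + 2 := by omega
              rw [d1, d2, pow_succ, pow_succ, pow_succ]
              omega
            omega
          · rw [List.isChain_append]
            refine ⟨hcA, ?_, ?_⟩
            · exact List.isChain_cons_cons.2 ⟨⟨hm1, hpm_notJ⟩,
                List.isChain_cons_cons.2 ⟨⟨h1', hmm'_notJ⟩,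
                  List.isChain_cons_cons.2 ⟨⟨h2'.symm, hm'b_notJ⟩, hcB⟩⟩⟩
            · intro z hz w hw
              simp only [List.head?_cons, Option.mem_def, Option.some.injEq] at hw
              subst hw
              exact hglue z hz p rfl
          · rw [head?_append_cons]
            rw [head?_append_cons] at hhead
            exact hhead
          · rw [List.getLast?_append_cons] at hlast ⊢
            rw [List.getLast?_cons_cons, List.getLast?_cons_cons] at hlast
            rw [List.getLast?_cons_cons, List.getLast?_cons_cons, List.getLast?_cons_cons]
            exact hlast
      · -- quadrangle case : dist x p = dist x a - 1
        have hdp : X.dist x p + 1 = X.dist x a := by omega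
        by_cases hpb : p = b
        · refine ih (A ++ p :: B) ?_ ?_ ?_ ?_
          · simp only [List.map_append, List.map_cons, List.sum_append, List.sum_cons] at hμ ⊢
            have h1 : 0 < 4 ^ X.dist x a := pow_pos (by norm_num) _
            have h2 : 0 < 4 ^ X.dist x b := pow_pos (by norm_num) _
            omega
          · rw [List.isChain_append]
            refine ⟨hcA, ?_, ?_⟩
            · rw [hpb]; exact hcB
            · intro z hz w hw
              simp only [List.head?_cons, Option.mem_def, Option.some.injEq] at hw
              subst hw
              exact hglue z hz p rfl
          · rw [head?_append_cons]
            rw [head?_append_cons] at hhead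
            exact hhead
          · rw [List.getLast?_append_cons] at hlast ⊢
            rw [List.getLast?_cons_cons, List.getLast?_cons_cons] at hlast
            cases B with
            | nil => simp only [List.getLast?_singleton] at hlast ⊢; rw [hpb]; exact hlast
            | cons c B' =>
              rw [List.getLast?_cons_cons] at hlast
              rw [List.getLast?_cons_cons]
              exact hlast
        · obtain ⟨m, hm1, hm2, hm3⟩ := hquad x a p b hpa hab.symm hpb (by omega) (by omega)
          have ham : a ≠ m := by
            intro h
            rw [← h] at hm3
            omega
          have hpm_notJ : s(p, m) ∉ J := fun hmem =>
            hRab.2 (hyp_mem_of_rel' hJ hmem (edgeRel_sq hab hm1 hpa.symm hm2 ham (Ne.symm hpb)))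
          have hmb_notJ : s(m, b) ∉ J := fun hmem =>
            hRpa.2 (hyp_mem_of_rel' hJ hmem (edgeRel_sq hpa hm2.symm hm1 hab hpb ham))
          refine ih (A ++ p :: m :: b :: B) ?_ ?_ ?_ ?_
          · simp only [List.map_append, List.map_cons, List.sum_append, List.sum_cons] at hμ ⊢
            have hkey : 4 ^ X.dist x m < 4 ^ X.dist x a :=
              Nat.pow_lt_pow_right (by norm_num) (by omega)
            omega
          · rw [List.isChain_append]
            refine ⟨hcA, ?_, ?_⟩
            · exact List.isChain_cons_cons.2 ⟨⟨hm1, hpm_notJ⟩,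
                List.isChain_cons_cons.2 ⟨⟨hm2.symm, hmb_notJ⟩, hcB⟩⟩
            · intro z hz w hw
              simp only [List.head?_cons, Option.mem_def, Option.some.injEq] at hw
              subst hw
              exact hglue z hz p rfl
          · rw [head?_append_cons]
            rw [head?_append_cons] at hhead
            exact hhead
          · rw [List.getLast?_append_cons] at hlast ⊢
            rw [List.getLast?_cons_cons, List.getLast?_cons_cons] at hlast
            rw [List.getLast?_cons_cons, List.getLast?_cons_cons]
            exact hlast

end Aux

/-- In a quasi-median graph, removing the (interiors of the) edges of any hyperplane
disconnects the graph. -/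
theorem deleteHyperplane_disconnected {V : Type*} (X : SimpleGraph V) (hX : QuasiMedian X) :
    ∀ J : Set (Sym2 V), IsHyperplane X J → ¬ (X.deleteEdges J).Connected := by
  obtain ⟨hconn, ⟨htri, hquad⟩, -, -⟩ := hX
  intro J hJ hcon
  obtain ⟨e0, he0, hJdef⟩ := hJ
  have hJ' : IsHyperplane X J := ⟨e0, he0, hJdef⟩
  obtain ⟨x, y, rfl⟩ : ∃ x y, e0 = s(x, y) := by
    induction e0 using Sym2.ind with
    | _ x y => exact ⟨x, y, rfl⟩
  have hadj : X.Adj x y := X.mem_edgeSet.1 he0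
  have hJxy : s(x, y) ∈ J := by
    rw [hJdef]
    exact ⟨he0, Relation.EqvGen.refl _⟩
  obtain ⟨w⟩ := hcon.preconnected x y
  have hch : List.IsChain (fun a b => X.Adj a b ∧ s(a, b) ∉ J) w.support := by
    refine (w.isChain_adj_support).imp ?_
    intro a b h
    rw [SimpleGraph.deleteEdges_adj] at h
    exact h
  have hhead : w.support.head? = some x := by rw [w.support_eq_cons]; rfl
  have hlast : w.support.getLast? = some y := by
    rw [List.getLast?_eq_getLast w.support_ne_nil]
    simp
  exact descent hJ' hconn htri hquad hadj hJxy _ w.support le_rfl hch hhead hlast
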